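/- In the centralizer Z̄_{m,n} of Ḡ'_{n-m} in F[Ḡ_n], the elements u_{k|n} = Σ_{i=k+1}^{n}(1−ε_i) t_{ki} (k,i) (1−ε_i), for 1 ≤ k ≤ m, pairwise commute, and moreover ε_k u_{k|n} = u_{k|n} ε_k = 0 and g·u_{k|n} = u_{k|n}·g for all g ∈ G^m. -/

import Mathlib

open MonoidAlgebra

/-- The group algebra `ℤ[G]`, used as an ambient ring in which `G ∪ {0}` embeds as
`{0} ∪ {single g 1 | g ∈ G}`. -/
abbrev GA (G : Type*) [Group G] := MonoidAlgebra ℤ G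

/-- `a` is an entry in `G ∪ {0}`. -/
def IsEnt {G : Type*} [Group G] (a : GA G) : Prop := a = 0 ∨ ∃ g : G, a = single g 1

/-- An `n × n` matrix with entries in `G ∪ {0}` such that every row and every column
contains at most one nonzero entry. -/
def IsRC {G : Type*} [Group G] {n : ℕ} (M : Matrix (Fin n) (Fin n) (GA G)) : Prop :=
  (∀ i, {j | M i j ≠ 0}.Subsingleton) ∧ (∀ j, {i | M i j ≠ 0}.Subsingleton) ∧
    ∀ i j, IsEnt (M i j)

theorem IsEnt.mul {G : Type*} [Group G] {a b : GA G} (ha : IsEnt a) (hb : IsEnt b) :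
    IsEnt (a * b) := by
  rcases ha with ha | ⟨g, rfl⟩
  · exact Or.inl (by simp [ha])
  rcases hb with hb | ⟨g', rfl⟩
  · exact Or.inl (by simp [hb])
  · exact Or.inr ⟨g * g', by simp [MonoidAlgebra.single_mul_single]⟩

theorem exists_of_mul_ne_zero {G : Type*} [Group G] {n : ℕ}
    {M N : Matrix (Fin n) (Fin n) (GA G)} {i j : Fin n} (h : (M * N) i j ≠ 0) :
    ∃ k, M i k ≠ 0 ∧ N k j ≠ 0 := by
  by_contra hc
  push_neg at hc
  apply h
  rw [Matrix.mul_apply]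
  refine Finset.sum_eq_zero fun k _ => ?_
  by_cases hk : M i k = 0
  · simp [hk]
  · simp [hc k hk]

/-- The semigroup `Ḡ_n` of `n × n` matrices over `G ∪ {0}` with at most one nonzero entry
in each row and each column, realized as a submonoid of the matrix ring over `ℤ[G]`. -/
def GBar (G : Type*) [Group G] (n : ℕ) : Submonoid (Matrix (Fin n) (Fin n) (GA G)) where
  carrier := {M | IsRC M}
  one_mem' := by
    have key : ∀ a b : Fin n, (1 : Matrix (Fin n) (Fin n) (GA G)) a b ≠ 0 → a = b := by
      intro a b h
      by_contra hab
      simp [Matrix.one_apply, hab] at h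
    refine ⟨fun i => ?_, fun j => ?_, fun i j => ?_⟩
    · intro a ha b hb
      exact (key i a ha).symm.trans (key i b hb)
    · intro a ha b hb
      exact (key a j ha).trans (key b j hb).symm
    · by_cases h : i = j
      · subst h
        exact Or.inr ⟨1, by simp [Matrix.one_apply, MonoidAlgebra.one_def]⟩
      · exact Or.inl (by simp [Matrix.one_apply, h])
  mul_mem' := by
    rintro M N ⟨hMr, hMc, hMe⟩ ⟨hNr, hNc, hNe⟩
    refine ⟨fun i => ?_, fun j => ?_, fun i j => ?_⟩
    · intro a ha b hb
      obtain ⟨k, hk1, hk2⟩ := exists_of_mul_ne_zero ha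
      obtain ⟨k', hk1', hk2'⟩ := exists_of_mul_ne_zero hb
      have : k = k' := hMr i hk1 hk1'
      subst this
      exact hNr k hk2 hk2'
    · intro a ha b hb
      obtain ⟨k, hk1, hk2⟩ := exists_of_mul_ne_zero ha
      obtain ⟨k', hk1', hk2'⟩ := exists_of_mul_ne_zero hb
      have : k = k' := hNc j hk2 hk2'
      subst this
      exact hMc k hk1 hk1'
    · by_cases h : (M * N) i j = 0
      · exact Or.inl h
      obtain ⟨k, hk1, hk2⟩ := exists_of_mul_ne_zero h
      have hsum : (M * N) i j = M i k * N k j := by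
        rw [Matrix.mul_apply]
        refine Finset.sum_eq_single k (fun b _ hb => ?_) (by simp)
        by_cases hbz : M i b = 0
        · simp [hbz]
        · exact absurd (hMr i hbz hk1) hb
      rw [hsum]
      exact (hMe i k).mul (hNe k j)

/-- The idempotent `ε_j ∈ Ḡ_n`: the diagonal matrix with `0` in position `(j,j)` and
`1` in the other diagonal positions. -/
noncomputable def epsEl (G : Type*) [Group G] {n : ℕ} (j : Fin n) : GBar G n :=
  ⟨Matrix.diagonal (fun i => if i = j then 0 else 1), by
    have key : ∀ a b : Fin n,
        Matrix.diagonal (fun i : Fin n => if i = j then (0 : GA G) else 1) a b ≠ 0 → a = b := by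
      intro a b h
      by_contra hab
      simp [Matrix.diagonal_apply_ne _ hab] at h
    refine ⟨fun i => ?_, fun k => ?_, fun i k => ?_⟩
    · intro a ha b hb
      exact (key i a ha).symm.trans (key i b hb)
    · intro a ha b hb
      exact (key a k ha).trans (key b k hb).symm
    · by_cases h : i = k
      · subst h
        by_cases hij : i = j
        · exact Or.inl (by simp [Matrix.diagonal_apply_eq, hij])
        · exact Or.inr ⟨1, by simp [Matrix.diagonal_apply_eq, hij, MonoidAlgebra.one_def]⟩
      · exact Or.inl (by simp [Matrix.diagonal_apply_ne _ h])⟩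

/-- The action of `S_n` on `G^n` by permuting coordinates. -/
def permHom (G : Type*) [Group G] (n : ℕ) : Equiv.Perm (Fin n) →* MulAut (Fin n → G) where
  toFun σ :=
    { toFun := fun g => g ∘ σ.symm
      invFun := fun g => g ∘ σ
      left_inv := fun g => by ext i; simp
      right_inv := fun g => by ext i; simp
      map_mul' := fun g h => rfl }
  map_one' := by ext g i; rfl
  map_mul' := fun σ τ => by ext g i; simp [Equiv.Perm.mul_def]

/-- The wreath product `G_n = G^n ⋊ S_n`. -/
abbrev Wreath (G : Type*) [Group G] (n : ℕ) :=
  SemidirectProduct (Fin n → G) (Equiv.Perm (Fin n)) (permHom G n)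

/-- The monoid embedding of the wreath product `G_n` into the matrices over `G ∪ {0}`:
`(g,σ)` goes to the matrix whose `(i,j)` entry is `g_i` if `σ(j) = i` and `0` otherwise. -/
noncomputable def wreathHom (G : Type*) [Group G] (n : ℕ) :
    Wreath G n →* Matrix (Fin n) (Fin n) (GA G) where
  toFun x := Matrix.of fun i j => if x.right j = i then single (x.left i) 1 else 0
  map_one' := by
    apply Matrix.ext
    intro i j
    by_cases h : i = j <;>
      simp [Matrix.one_apply, h, MonoidAlgebra.one_def, eq_comm]
  map_mul' := by
    rintro ⟨a, σ⟩ ⟨b, τ⟩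
    apply Matrix.ext
    intro i j
    rw [Matrix.mul_apply, Finset.sum_eq_single (τ j)]
    · simp only [SemidirectProduct.mul_left, SemidirectProduct.mul_right, Matrix.of_apply]
      rw [Equiv.Perm.mul_apply]
      by_cases h : σ (τ j) = i
      · rw [if_pos h, if_pos h]
        simp only [if_true]
        rw [MonoidAlgebra.single_mul_single]
        congr 1
        have hs : σ.symm i = τ j := by rw [← h]; simp
        simp [permHom, Pi.mul_apply, hs]
      · rw [if_neg h, if_neg h, zero_mul]
    · intro b' _ hb'
      simp only [Matrix.of_apply]
      exact mul_eq_zero_of_right _ (if_neg fun hc => hb' hc.symm)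
    · simp

theorem wreathHom_mem_GBar (G : Type*) [Group G] (n : ℕ) (x : Wreath G n) :
    wreathHom G n x ∈ GBar G n := by
  have key : ∀ i j : Fin n, wreathHom G n x i j ≠ 0 → x.right j = i := by
    intro i j h
    by_contra hc
    simp [wreathHom, hc] at h
  refine ⟨fun i => ?_, fun j => ?_, fun i j => ?_⟩
  · intro a ha b hb
    exact x.right.injective ((key i a ha).trans (key i b hb).symm)
  · intro a ha b hb
    exact (key a j ha).symm.trans (key b j hb)
  · by_cases h : x.right j = i
    · exact Or.inr ⟨x.left i, by simp [wreathHom, h]⟩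
    · exact Or.inl (by simp [wreathHom, h])

/-- The wreath product `G_n` as the submonoid of `Ḡ_n` of matrices with exactly one
nonzero entry in each row and each column. -/
noncomputable def GFull (G : Type*) [Group G] (n : ℕ) :
    Submonoid (Matrix (Fin n) (Fin n) (GA G)) :=
  MonoidHom.mrange (wreathHom G n)

theorem GFull_le_GBar (G : Type*) [Group G] (n : ℕ) : GFull G n ≤ GBar G n := by
  rintro M ⟨x, rfl⟩
  exact wreathHom_mem_GBar G n x

/-- An element of the wreath product, viewed inside `Ḡ_n`. -/
noncomputable def wEl {G : Type*} [Group G] {n : ℕ} (x : Wreath G n) : GBar G n :=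
  ⟨wreathHom G n x, wreathHom_mem_GBar G n x⟩

/-- `h^{(i)} ∈ G^n`: the tuple with `h` in the `i`-th coordinate and `1` elsewhere. -/
def coordEl {G : Type*} [Group G] {n : ℕ} (i : Fin n) (h : G) : Fin n → G :=
  fun j => if j = i then h else 1

/-- `t_{ki} = Σ_{h ∈ G} h^{(k)} (h⁻¹)^{(i)} ∈ F[G^n] ⊆ F[Ḡ_n]`. -/
noncomputable def tEl (F : Type*) [Field F] (G : Type*) [Group G] [Fintype G] {n : ℕ}
    (k i : Fin n) : MonoidAlgebra F (GBar G n) :=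
  ∑ h : G, single (wEl (⟨coordEl k h * coordEl i h⁻¹, 1⟩ : Wreath G n)) (1 : F)

/-- `u_{k|n} = Σ_{i>k} (1−ε_i) t_{ki} (k,i) (1−ε_i) ∈ F[Ḡ_n]`. -/
noncomputable def uEl (F : Type*) [Field F] (G : Type*) [Group G] [Fintype G] {n : ℕ}
    (k : Fin n) : MonoidAlgebra F (GBar G n) :=
  ∑ i ∈ Finset.Ioi k,
    (1 - single (epsEl G i) (1 : F)) * tEl F G k i *
      single (wEl (⟨1, Equiv.swap k i⟩ : Wreath G n)) (1 : F) *
      (1 - single (epsEl G i) (1 : F))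

section Aux

variable {G : Type*} [Group G] {n : ℕ}

lemma wEl_mul (x y : Wreath G n) : wEl (x * y) = wEl x * wEl y :=
  Subtype.ext (map_mul (wreathHom G n) x y)

lemma epsEl_comm' (i j : Fin n) : epsEl G i * epsEl G j = epsEl G j * epsEl G i := by
  apply Subtype.ext
  show ((epsEl G i : GBar G n) : Matrix (Fin n) (Fin n) (GA G)) * (epsEl G j : GBar G n)
      = ((epsEl G j : GBar G n) : Matrix (Fin n) (Fin n) (GA G)) * (epsEl G i : GBar G n)
  show Matrix.diagonal _ * Matrix.diagonal _ = Matrix.diagonal _ * Matrix.diagonal _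
  rw [Matrix.diagonal_mul_diagonal, Matrix.diagonal_mul_diagonal]
  apply congrArg Matrix.diagonal
  funext a
  by_cases h : a = i <;> by_cases h2 : a = j <;> simp [h, h2]

lemma epsEl_idem (i : Fin n) : epsEl G i * epsEl G i = epsEl G i := by
  apply Subtype.ext
  show ((epsEl G i : GBar G n) : Matrix (Fin n) (Fin n) (GA G)) * (epsEl G i : GBar G n)
      = ((epsEl G i : GBar G n) : Matrix (Fin n) (Fin n) (GA G))
  show Matrix.diagonal _ * Matrix.diagonal _ = Matrix.diagonal _
  rw [Matrix.diagonal_mul_diagonal]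
  apply congrArg Matrix.diagonal
  funext a
  by_cases h : a = i <;> simp [h]

lemma epsEl_mul_wEl (j : Fin n) (x : Wreath G n) :
    epsEl G j * wEl x = wEl x * epsEl G (x.right.symm j) := by
  apply Subtype.ext
  show ((epsEl G j : GBar G n) : Matrix (Fin n) (Fin n) (GA G)) * (wEl x : GBar G n)
      = ((wEl x : GBar G n) : Matrix (Fin n) (Fin n) (GA G)) * (epsEl G (x.right.symm j) : GBar G n)
  apply Matrix.ext
  intro a b
  show ((Matrix.diagonal fun i => if i = j then (0 : GA G) else 1) * wreathHom G n x) a b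
      = (wreathHom G n x * Matrix.diagonal fun i => if i = x.right.symm j then (0 : GA G) else 1) a b
  rw [Matrix.diagonal_mul, Matrix.mul_diagonal]
  show (if a = j then (0:GA G) else 1) * (if x.right b = a then single (x.left a) 1 else 0)
      = (if x.right b = a then single (x.left a) 1 else 0) * (if b = x.right.symm j then 0 else 1)
  by_cases h : x.right b = a
  · subst h
    by_cases h2 : x.right b = j <;> simp [Equiv.eq_symm_apply, h2]
  · simp [h]

lemma mk_mul_mk (a b : Fin n → G) (σ τ : Equiv.Perm (Fin n)) :
    (⟨a, σ⟩ * ⟨b, τ⟩ : Wreath G n) = ⟨a * (b ∘ σ.symm), σ * τ⟩ :=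
  SemidirectProduct.ext rfl rfl

/-- the building block of `u`: `h^{(k)} (h⁻¹)^{(i)} · (k,i)` as an element of the wreath product. -/
def tw (k i : Fin n) (h : G) : Wreath G n :=
  ⟨coordEl k h * coordEl i h⁻¹, Equiv.swap k i⟩

lemma tw_mul_disjoint {k i l j : Fin n} (hki : k ≠ i) (hkl : k ≠ l) (hkj : k ≠ j)
    (hil : i ≠ l) (hij : i ≠ j) (hlj : l ≠ j) (h h' : G) :
    tw k i h * tw l j h' = tw l j h' * tw k i h := by
  unfold tw
  rw [mk_mul_mk, mk_mul_mk]
  congr 1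
  · funext x
    simp only [Pi.mul_apply, Function.comp_apply, coordEl, Equiv.symm_swap, Equiv.Perm.one_symm,
      Equiv.Perm.coe_one, id_eq, Equiv.swap_apply_def]
    split_ifs <;> simp_all <;> group
  · rw [Equiv.mul_swap_eq_swap_mul, Equiv.swap_apply_of_ne_of_ne hkl.symm hil.symm,
      Equiv.swap_apply_of_ne_of_ne hkj.symm hij.symm]

lemma tw_mul_2 {k l j : Fin n} (hkl : k ≠ l) (hkj : k ≠ j) (hlj : l ≠ j) (h h' : G) :
    tw k l h * tw l j h' = tw l j h' * tw k j (h * h') := by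
  unfold tw
  rw [mk_mul_mk, mk_mul_mk]
  congr 1
  · funext x
    simp only [Pi.mul_apply, Function.comp_apply, coordEl, Equiv.symm_swap, Equiv.Perm.one_symm,
      Equiv.Perm.coe_one, id_eq, Equiv.swap_apply_def]
    split_ifs <;> simp_all <;> group
  · rw [Equiv.mul_swap_eq_swap_mul (Equiv.swap l j) k j, Equiv.swap_apply_of_ne_of_ne hkl hkj,
      Equiv.swap_apply_right]

lemma tw_mul_3 {k l j : Fin n} (hkl : k ≠ l) (hkj : k ≠ j) (hlj : l ≠ j) (h h' : G) :
    tw k j h * tw l j h' = tw l j h' * tw k l (h * h'⁻¹) := by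
  unfold tw
  rw [mk_mul_mk, mk_mul_mk]
  congr 1
  · funext x
    simp only [Pi.mul_apply, Function.comp_apply, coordEl, Equiv.symm_swap, Equiv.Perm.one_symm,
      Equiv.Perm.coe_one, id_eq, Equiv.swap_apply_def]
    split_ifs <;> simp_all <;> group
  · rw [Equiv.mul_swap_eq_swap_mul (Equiv.swap l j) k l, Equiv.swap_apply_of_ne_of_ne hkl hkj,
      Equiv.swap_apply_left]

lemma tw_mul_diag {k i : Fin n} (hki : k ≠ i) (g : Fin n → G) (h : G) :
    (⟨g, 1⟩ : Wreath G n) * tw k i h = tw k i (g k * h * (g i)⁻¹) * ⟨g, 1⟩ := by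
  unfold tw
  rw [mk_mul_mk, mk_mul_mk]
  congr 1
  · funext x
    simp only [Pi.mul_apply, Function.comp_apply, coordEl, Equiv.symm_swap, Equiv.Perm.one_symm,
      Equiv.Perm.coe_one, id_eq, Equiv.swap_apply_def]
    split_ifs <;> simp_all <;> group

end Aux

section Alg

variable (F : Type*) [Field F] (G : Type*) [Group G] [Fintype G] {n : ℕ}

/-- `ε_i` as an element of the monoid algebra. -/
noncomputable def eA (i : Fin n) : MonoidAlgebra F (GBar G n) := single (epsEl G i) 1

/-- `1 - ε_i` as an element of the monoid algebra. -/
noncomputable def pA (i : Fin n) : MonoidAlgebra F (GBar G n) := 1 - eA F G i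

/-- `w_{ki} = t_{ki}·(k,i)` as an element of the monoid algebra. -/
noncomputable def wA (k i : Fin n) : MonoidAlgebra F (GBar G n) :=
  tEl F G k i * single (wEl (⟨1, Equiv.swap k i⟩ : Wreath G n)) 1

/-- A single summand of `u_{k|n}`. -/
noncomputable def vA (k i : Fin n) : MonoidAlgebra F (GBar G n) :=
  pA F G i * tEl F G k i * single (wEl (⟨1, Equiv.swap k i⟩ : Wreath G n)) 1 * pA F G i

lemma uEl_eq (k : Fin n) : uEl F G k = ∑ i ∈ Finset.Ioi k, vA F G k i := rfl

lemma single_single (a b : GBar G n) : (single a (1:F)) * single b 1 = single (a * b) 1 := by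
  rw [MonoidAlgebra.single_mul_single, one_mul]

lemma eA_comm (i j : Fin n) : eA F G i * eA F G j = eA F G j * eA F G i := by
  unfold eA; rw [single_single, single_single, epsEl_comm']

lemma eA_idem (i : Fin n) : eA F G i * eA F G i = eA F G i := by
  unfold eA; rw [single_single, epsEl_idem]

lemma eA_mul_w (j : Fin n) (x : Wreath G n) :
    eA F G j * single (wEl x) (1:F) = single (wEl x) 1 * eA F G (x.right.symm j) := by
  unfold eA; rw [single_single, single_single, epsEl_mul_wEl]

lemma wA_eq (k i : Fin n) : wA F G k i = ∑ h : G, single (wEl (tw k i h)) (1:F) := by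
  unfold wA tEl
  rw [Finset.sum_mul]
  refine Finset.sum_congr rfl fun h _ => ?_
  have : (⟨coordEl k h * coordEl i h⁻¹, 1⟩ : Wreath G n) * ⟨1, Equiv.swap k i⟩ = tw k i h := by
    unfold tw
    rw [mk_mul_mk]
    exact SemidirectProduct.ext (by funext x; simp) (one_mul _)
  rw [single_single, ← wEl_mul, this]

lemma eA_mul_wA (j k i : Fin n) :
    eA F G j * wA F G k i = wA F G k i * eA F G (Equiv.swap k i j) := by
  rw [wA_eq, Finset.mul_sum, Finset.sum_mul]
  refine Finset.sum_congr rfl fun h _ => ?_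
  rw [eA_mul_w]
  have : (Equiv.symm (tw k i h).right) j = Equiv.swap k i j := by simp [tw]
  rw [this]

lemma pA_mul_wA (j k i : Fin n) :
    pA F G j * wA F G k i = wA F G k i * pA F G (Equiv.swap k i j) := by
  unfold pA; rw [sub_mul, mul_sub, one_mul, mul_one, eA_mul_wA]

lemma wA_mul_pA (j k i : Fin n) :
    wA F G k i * pA F G j = pA F G (Equiv.swap k i j) * wA F G k i := by
  have := pA_mul_wA F G (Equiv.swap k i j) k i
  rwa [Equiv.swap_apply_self, eq_comm] at this

lemma pA_comm (i j : Fin n) : pA F G i * pA F G j = pA F G j * pA F G i := by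
  simp only [pA, sub_mul, mul_sub, one_mul, mul_one]
  rw [eA_comm]
  abel

lemma pA_idem (i : Fin n) : pA F G i * pA F G i = pA F G i := by
  simp only [pA, sub_mul, mul_sub, one_mul, mul_one, eA_idem]
  abel

lemma vA_eq (k i : Fin n) : vA F G k i = pA F G i * pA F G k * wA F G k i := by
  unfold vA
  rw [mul_assoc (pA F G i)]
  show pA F G i * wA F G k i * pA F G i = _
  rw [mul_assoc, wA_mul_pA, Equiv.swap_apply_right, ← mul_assoc]

/- associativity-friendly forms -/
lemma wA_pA_assoc (j k i : Fin n) (x : MonoidAlgebra F (GBar G n)) :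
    wA F G k i * (pA F G j * x) = pA F G (Equiv.swap k i j) * (wA F G k i * x) := by
  rw [← mul_assoc, wA_mul_pA, mul_assoc]

lemma pA_pA_assoc (i j : Fin n) (x : MonoidAlgebra F (GBar G n)) :
    pA F G i * (pA F G j * x) = pA F G j * (pA F G i * x) := by
  rw [← mul_assoc, pA_comm, mul_assoc]

lemma pA_idem_assoc (i : Fin n) (x : MonoidAlgebra F (GBar G n)) :
    pA F G i * (pA F G i * x) = pA F G i * x := by
  rw [← mul_assoc, pA_idem]

lemma wA_comm_disjoint {k i l j : Fin n} (hki : k ≠ i) (hkl : k ≠ l) (hkj : k ≠ j)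
    (hil : i ≠ l) (hij : i ≠ j) (hlj : l ≠ j) :
    wA F G k i * wA F G l j = wA F G l j * wA F G k i := by
  rw [wA_eq, wA_eq, Finset.sum_mul_sum, Finset.sum_mul_sum, Finset.sum_comm]
  refine Finset.sum_congr rfl fun h' _ => Finset.sum_congr rfl fun h _ => ?_
  rw [single_single, single_single, ← wEl_mul, ← wEl_mul,
    tw_mul_disjoint hki hkl hkj hil hij hlj]

lemma wA_mul_2 {k l j : Fin n} (hkl : k ≠ l) (hkj : k ≠ j) (hlj : l ≠ j) :
    wA F G k l * wA F G l j = wA F G l j * wA F G k j := by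
  rw [wA_eq, wA_eq, wA_eq, Finset.sum_mul_sum, Finset.sum_mul_sum, Finset.sum_comm]
  refine Finset.sum_congr rfl fun h' _ => ?_
  refine Fintype.sum_equiv (Equiv.mulRight h') _ _ fun h => ?_
  simp only [Equiv.coe_mulRight]
  rw [single_single, single_single, ← wEl_mul, ← wEl_mul, tw_mul_2 hkl hkj hlj]

lemma wA_mul_3 {k l j : Fin n} (hkl : k ≠ l) (hkj : k ≠ j) (hlj : l ≠ j) :
    wA F G k j * wA F G l j = wA F G l j * wA F G k l := by
  rw [wA_eq, wA_eq, wA_eq, Finset.sum_mul_sum, Finset.sum_mul_sum, Finset.sum_comm]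
  refine Finset.sum_congr rfl fun h' _ => ?_
  refine Fintype.sum_equiv (Equiv.mulRight h'⁻¹) _ _ fun h => ?_
  simp only [Equiv.coe_mulRight]
  rw [single_single, single_single, ← wEl_mul, ← wEl_mul, tw_mul_3 hkl hkj hlj]

end Alg

section Main

variable (F : Type*) [Field F] (G : Type*) [Group G] [Fintype G] {n : ℕ}

lemma eA_pA_comm (i j : Fin n) : eA F G i * pA F G j = pA F G j * eA F G i := by
  simp only [pA, mul_sub, sub_mul, mul_one, one_mul]
  rw [eA_comm]

lemma eA_mul_pA_self (k : Fin n) : eA F G k * pA F G k = 0 := by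
  unfold pA; rw [mul_sub, mul_one, eA_idem, sub_self]

lemma pA_mul_eA_self (k : Fin n) : pA F G k * eA F G k = 0 := by
  unfold pA; rw [sub_mul, one_mul, eA_idem, sub_self]

lemma eA_mul_vA {k i : Fin n} (hki : k ≠ i) : eA F G k * vA F G k i = 0 := by
  rw [vA_eq]
  calc eA F G k * (pA F G i * pA F G k * wA F G k i)
      = pA F G i * (eA F G k * pA F G k) * wA F G k i := by
        rw [← mul_assoc, ← mul_assoc, ← mul_assoc, eA_pA_comm]
    _ = 0 := by rw [eA_mul_pA_self, mul_zero, zero_mul]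

lemma wA_mul_eA_self (k i : Fin n) : wA F G k i * eA F G k = eA F G i * wA F G k i := by
  have := eA_mul_wA F G i k i
  rw [Equiv.swap_apply_right] at this
  exact this.symm

lemma vA_mul_eA {k i : Fin n} (hki : k ≠ i) : vA F G k i * eA F G k = 0 := by
  rw [vA_eq, mul_assoc, wA_mul_eA_self, ← mul_assoc, mul_assoc (pA F G i), ← eA_pA_comm,
    ← mul_assoc, pA_mul_eA_self, zero_mul, zero_mul]

lemma v_mul_disjoint {k i l j : Fin n} (hki : k ≠ i) (hkl : k ≠ l) (hkj : k ≠ j)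
    (hil : i ≠ l) (hij : i ≠ j) (hlj : l ≠ j) :
    vA F G k i * vA F G l j = vA F G l j * vA F G k i := by
  simp only [vA_eq, mul_assoc]
  conv_lhs => rw [wA_pA_assoc, Equiv.swap_apply_of_ne_of_ne hkj.symm hij.symm,
    wA_pA_assoc, Equiv.swap_apply_of_ne_of_ne hkl.symm hil.symm]
  conv_rhs => rw [wA_pA_assoc, Equiv.swap_apply_of_ne_of_ne hil hij,
    wA_pA_assoc, Equiv.swap_apply_of_ne_of_ne hkl hkj,
    pA_pA_assoc F G l i, pA_pA_assoc F G j i, pA_pA_assoc F G l k, pA_pA_assoc F G j k,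
    ← wA_comm_disjoint F G hki hkl hkj hil hij hlj]

lemma v_case1 {k l j : Fin n} (hkl : k ≠ l) (hkj : k ≠ j) (hlj : l ≠ j) :
    vA F G k l * vA F G l j = vA F G l j * vA F G k j := by
  simp only [vA_eq, mul_assoc]
  conv_lhs => rw [wA_pA_assoc, Equiv.swap_apply_of_ne_of_ne hkj.symm hlj.symm,
    wA_pA_assoc, Equiv.swap_apply_right,
    wA_mul_2 F G hkl hkj hlj,
    pA_pA_assoc F G j k, pA_idem_assoc F G k]
  conv_rhs => rw [wA_pA_assoc, Equiv.swap_apply_right, pA_idem_assoc F G l,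
    wA_pA_assoc, Equiv.swap_apply_of_ne_of_ne hkl hkj,
    pA_pA_assoc F G j l, pA_pA_assoc F G j k]

lemma v_case2 {k l j : Fin n} (hkl : k ≠ l) (hkj : k ≠ j) (hlj : l ≠ j) :
    vA F G k j * vA F G l j = vA F G l j * vA F G k l := by
  simp only [vA_eq, mul_assoc]
  conv_lhs => rw [wA_pA_assoc, Equiv.swap_apply_right, pA_idem_assoc F G k,
    wA_pA_assoc, Equiv.swap_apply_of_ne_of_ne hkl.symm hlj,
    wA_mul_3 F G hkl hkj hlj]
  conv_rhs => rw [wA_pA_assoc, Equiv.swap_apply_left,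
    wA_pA_assoc, Equiv.swap_apply_of_ne_of_ne hkl hkj,
    pA_pA_assoc F G l j, pA_idem_assoc F G j, pA_pA_assoc F G l k]

lemma u_comm_lt {k l : Fin n} (hkl : k < l) :
    uEl F G k * uEl F G l = uEl F G l * uEl F G k := by
  simp only [uEl_eq]
  rw [Finset.sum_mul_sum, Finset.sum_mul_sum, ← Finset.sum_product', ← Finset.sum_product']
  refine Finset.sum_nbij'
    (fun p => (p.2, if p.1 = l then p.2 else if p.1 = p.2 then l else p.1))
    (fun q => (if q.2 = l then q.1 else if q.2 = q.1 then l else q.2, q.1))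
    ?_ ?_ ?_ ?_ ?_
  · rintro ⟨i, j⟩ hp
    simp only [Finset.mem_product, Finset.mem_Ioi] at hp ⊢
    obtain ⟨hi, hj⟩ := hp
    refine ⟨hj, ?_⟩
    split_ifs
    · exact lt_trans hkl hj
    · exact hkl
    · exact hi
  · rintro ⟨j, i⟩ hq
    simp only [Finset.mem_product, Finset.mem_Ioi] at hq ⊢
    obtain ⟨hj, hi⟩ := hq
    refine ⟨?_, hj⟩
    split_ifs
    · exact lt_trans hkl hj
    · exact hkl
    · exact hi
  · rintro ⟨i, j⟩ hp
    simp only [Finset.mem_product, Finset.mem_Ioi] at hp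
    obtain ⟨hi, hj⟩ := hp
    have hjl : j ≠ l := ne_of_gt hj
    by_cases h1 : i = l
    · subst h1; simp [hjl]
    · by_cases h2 : i = j
      · subst h2; simp [h1]
      · simp [h1, h2]
  · rintro ⟨j, i⟩ hq
    simp only [Finset.mem_product, Finset.mem_Ioi] at hq
    obtain ⟨hj, hi⟩ := hq
    have hjl : j ≠ l := ne_of_gt hj
    by_cases h1 : i = l
    · subst h1; simp [hjl]
    · by_cases h2 : i = j
      · subst h2; simp [h1]
      · simp [h1, h2]
  · rintro ⟨i, j⟩ hp
    simp only [Finset.mem_product, Finset.mem_Ioi] at hp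
    obtain ⟨hi, hj⟩ := hp
    have hkj : k < j := lt_trans hkl hj
    by_cases h1 : i = l
    · subst h1
      simp only [if_pos rfl]
      exact v_case1 F G (ne_of_lt hkl) (ne_of_lt hkj) (ne_of_lt hj)
    · by_cases h2 : i = j
      · subst h2
        simp only [if_neg h1, if_pos rfl]
        exact v_case2 F G (ne_of_lt hkl) (ne_of_lt hi) (Ne.symm h1)
      · simp only [if_neg h1, if_neg h2]
        exact v_mul_disjoint F G (ne_of_lt hi) (ne_of_lt hkl) (ne_of_lt hkj) h1 h2
          (ne_of_lt hj)

lemma dA_eA_comm (g : Fin n → G) (j : Fin n) :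
    single (wEl (⟨g, 1⟩ : Wreath G n)) (1:F) * eA F G j
      = eA F G j * single (wEl (⟨g, 1⟩ : Wreath G n)) (1:F) := by
  rw [eA_mul_w]
  have : (Equiv.symm (⟨g, 1⟩ : Wreath G n).right) j = j := rfl
  rw [this]

lemma dA_pA_comm (g : Fin n → G) (j : Fin n) :
    single (wEl (⟨g, 1⟩ : Wreath G n)) (1:F) * pA F G j
      = pA F G j * single (wEl (⟨g, 1⟩ : Wreath G n)) (1:F) := by
  simp only [pA, mul_sub, sub_mul, mul_one, one_mul, dA_eA_comm]

lemma dA_wA_comm (g : Fin n → G) {k i : Fin n} (hki : k ≠ i) :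
    single (wEl (⟨g, 1⟩ : Wreath G n)) (1:F) * wA F G k i
      = wA F G k i * single (wEl (⟨g, 1⟩ : Wreath G n)) (1:F) := by
  rw [wA_eq, Finset.mul_sum, Finset.sum_mul]
  refine Fintype.sum_equiv ((Equiv.mulLeft (g k)).trans (Equiv.mulRight (g i)⁻¹)) _ _ fun h => ?_
  simp only [Equiv.trans_apply, Equiv.coe_mulLeft, Equiv.coe_mulRight]
  rw [single_single, single_single, ← wEl_mul, ← wEl_mul, tw_mul_diag hki g h]

lemma dA_vA_comm (g : Fin n → G) {k i : Fin n} (hki : k ≠ i) :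
    single (wEl (⟨g, 1⟩ : Wreath G n)) (1:F) * vA F G k i
      = vA F G k i * single (wEl (⟨g, 1⟩ : Wreath G n)) (1:F) := by
  rw [vA_eq, ← mul_assoc, ← mul_assoc, dA_pA_comm, mul_assoc (pA F G i), dA_pA_comm,
    ← mul_assoc, mul_assoc (pA F G i * pA F G k), dA_wA_comm F G g hki, ← mul_assoc]

end Main

/-- In the centralizer `Z̄_{m,n}` of `Ḡ'_{n−m}` in `F[Ḡ_n]`, the elements
`u_{k|n} = Σ_{i>k} (1−ε_i) t_{ki} (k,i) (1−ε_i)`, `1 ≤ k ≤ m`, pairwise commute; moreover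
`ε_k u_{k|n} = u_{k|n} ε_k = 0` and `g·u_{k|n} = u_{k|n}·g` for all `g ∈ G^m`. -/
theorem uEl_relations (F : Type*) [Field F] (G : Type*) [Group G] [Fintype G]
    (n m : ℕ) (hm : m ≤ n) :
    (∀ k l : Fin n, (k : ℕ) < m → (l : ℕ) < m →
      uEl F G k * uEl F G l = uEl F G l * uEl F G k) ∧
    (∀ k : Fin n, (k : ℕ) < m →
      single (epsEl G k) (1 : F) * uEl F G k = 0 ∧
      uEl F G k * single (epsEl G k) (1 : F) = 0) ∧
    (∀ (k : Fin n) (g : Fin n → G), (k : ℕ) < m → (∀ i : Fin n, m ≤ (i : ℕ) → g i = 1) →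
      single (wEl (⟨g, 1⟩ : Wreath G n)) (1 : F) * uEl F G k =
        uEl F G k * single (wEl (⟨g, 1⟩ : Wreath G n)) (1 : F)) := by
  constructor
  · intro k l _ _
    rcases lt_trichotomy k l with h | rfl | h
    · exact u_comm_lt F G h
    · rfl
    · exact (u_comm_lt F G h).symm
  constructor
  · intro k _
    constructor
    · rw [uEl_eq, Finset.mul_sum]
      exact Finset.sum_eq_zero fun i hi => eA_mul_vA F G (ne_of_lt (Finset.mem_Ioi.mp hi))
    · rw [uEl_eq, Finset.sum_mul]
      exact Finset.sum_eq_zero fun i hi => vA_mul_eA F G (ne_of_lt (Finset.mem_Ioi.mp hi))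
  · intro k g _ _
    rw [uEl_eq, Finset.mul_sum, Finset.sum_mul]
    exact Finset.sum_congr rfl fun i hi => dA_vA_comm F G g (ne_of_lt (Finset.mem_Ioi.mp hi))
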